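/- arXiv:1910.08125 — 2 statements merged into one kernel-verified Lean document; each statement's English description precedes it below -/
import Mathlib

section
/- For each k in {1,...,n}, the set P^k_+ := {z in R^n : s^+(z) ≤ k-1} is the topological interior of the set P^k_- := {z in R^n : s^-(z) ≤ k-1}, and P^k_- is closed. -/
open Classical

/-- Number of sign variations in a list of reals (adjacent pairs with negative product). -/
noncomputable def signVarAux : List ℝ → ℕ
  | [] => 0
  | [_] => 0
  | a :: b :: t => (if a * b < 0 then 1 else 0) + signVarAux (b :: t)

/-- `s⁻(y)`: sign variations after deleting zero entries. -/
noncomputable def sminus {n : ℕ} (y : Fin n → ℝ) : ℕ :=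
  signVarAux ((List.ofFn y).filter (fun x => decide (x ≠ 0)))

/-- `s⁺(y)`: maximal sign variations after replacing each zero entry by `+1` or `-1`. -/
noncomputable def splus {n : ℕ} (y : Fin n → ℝ) : ℕ :=
  Finset.univ.sup fun σ : Fin n → Bool =>
    signVarAux (List.ofFn fun i => if y i = 0 then (if σ i then (1:ℝ) else -1) else y i)

/-- `A` is strictly sign-regular of order `k`. -/
def SSRk {n m : ℕ} (A : Matrix (Fin n) (Fin m) ℝ) (k : ℕ) : Prop :=
  (∀ (α : Fin k → Fin n) (β : Fin k → Fin m), StrictMono α → StrictMono β →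
      0 < (A.submatrix α β).det) ∨
  (∀ (α : Fin k → Fin n) (β : Fin k → Fin m), StrictMono α → StrictMono β →
      (A.submatrix α β).det < 0)

/-- `A` is sign-regular of order `k`. -/
def SRk {n m : ℕ} (A : Matrix (Fin n) (Fin m) ℝ) (k : ℕ) : Prop :=
  (∀ (α : Fin k → Fin n) (β : Fin k → Fin m), StrictMono α → StrictMono β →
      0 ≤ (A.submatrix α β).det) ∨
  (∀ (α : Fin k → Fin n) (β : Fin k → Fin m), StrictMono α → StrictMono β →
      (A.submatrix α β).det ≤ 0)

noncomputable instance {k n : ℕ} : Fintype {s : Fin k → Fin n // StrictMono s} :=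
  Fintype.ofFinite _

/-- The `k`-th multiplicative compound of `A`. -/
noncomputable def compound {n m : ℕ} (k : ℕ) (A : Matrix (Fin n) (Fin m) ℝ) :
    Matrix {s : Fin k → Fin n // StrictMono s} {s : Fin k → Fin m // StrictMono s} ℝ :=
  fun α β => (A.submatrix α.1 β.1).det

lemma signVarAux_cons₂ (a b : ℝ) (t : List ℝ) :
    signVarAux (a :: b :: t) = (if a * b < 0 then 1 else 0) + signVarAux (b :: t) := rfl

lemma signVarAux_congr {l₁ l₂ : List ℝ} (h : List.Forall₂ (fun a b => 0 < a * b) l₁ l₂) :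
    signVarAux l₁ = signVarAux l₂ := by
  induction h with
  | nil => rfl
  | @cons a b l₁ l₂ hab htail ih =>
    rcases htail with _ | @⟨c, d, l₁', l₂', hcd, h'⟩
    · rfl
    · rw [signVarAux_cons₂, signVarAux_cons₂, ih]
      congr 1
      have hiff : a * c < 0 ↔ b * d < 0 := by
        constructor <;> intro h'' <;> nlinarith
      by_cases hac : a * c < 0
      · rw [if_pos hac, if_pos (hiff.mp hac)]
      · rw [if_neg hac, if_neg (fun hh => hac (hiff.mpr hh))]

lemma signVar_le_cons (b : ℝ) (l : List ℝ) : signVarAux l ≤ signVarAux (b :: l) := by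
  cases l with
  | nil => simp [signVarAux]
  | cons c t => rw [signVarAux_cons₂]; omega

lemma triangle {a b c : ℝ} (hb : b ≠ 0) :
    (if a * c < 0 then 1 else 0) ≤ (if a * b < 0 then 1 else 0) + (if b * c < 0 then 1 else 0) := by
  by_cases h1 : a * c < 0
  · by_cases h2 : a * b < 0
    · simp only [if_pos h1, if_pos h2]; omega
    · by_cases h3 : b * c < 0
      · simp only [if_pos h1, if_neg h2, if_pos h3]; omega
      · exfalso
        have hab : 0 ≤ a * b := not_lt.mp h2
        have hbc : 0 ≤ b * c := not_lt.mp h3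
        have hbb : 0 < b * b := mul_self_pos.mpr hb
        nlinarith
  · simp only [if_neg h1]; omega

lemma signVarAux_sublist {l₁ l₂ : List ℝ} (h : l₁.Sublist l₂) (hnz : ∀ x ∈ l₂, x ≠ 0) :
    signVarAux l₁ ≤ signVarAux l₂ ∧
      ∀ a : ℝ, a ≠ 0 → signVarAux (a :: l₁) ≤ signVarAux (a :: l₂) := by
  induction h with
  | slnil => exact ⟨le_refl _, fun a _ => le_refl _⟩
  | @cons l₁ l₂ b hsub ih =>
    have hb : b ≠ 0 := hnz b List.mem_cons_self
    have hnz' : ∀ x ∈ l₂, x ≠ 0 := fun x hx => hnz x (List.mem_cons_of_mem _ hx)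
    obtain ⟨ih1, ih2⟩ := ih hnz'
    constructor
    · exact ih1.trans (signVar_le_cons b l₂)
    · intro a ha
      refine (ih2 a ha).trans ?_
      cases l₂ with
      | nil => simp [signVarAux]
      | cons c t =>
        have hc : c ≠ 0 := hnz' c List.mem_cons_self
        rw [signVarAux_cons₂ a c t, signVarAux_cons₂ a b (c :: t), signVarAux_cons₂ b c t]
        have := triangle (a := a) (b := b) (c := c) hb
        omega
  | @cons_cons l₁ l₂ x hsub ih =>
    have hx : x ≠ 0 := hnz x List.mem_cons_self
    have hnz' : ∀ y ∈ l₂, y ≠ 0 := fun y hy => hnz y (List.mem_cons_of_mem _ hy)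
    obtain ⟨ih1, ih2⟩ := ih hnz'
    refine ⟨ih2 x hx, fun a ha => ?_⟩
    rw [signVarAux_cons₂ a x l₁, signVarAux_cons₂ a x l₂]
    have := ih2 x hx
    omega

lemma exists_matching_sublist :
    ∀ (l : List (ℝ × ℝ)), (∀ p ∈ l, p.2 ≠ 0 → 0 < p.1 * p.2) →
    ∃ m : List ℝ, m.Sublist ((l.map Prod.fst).filter (fun x => decide (x ≠ 0))) ∧
      List.Forall₂ (fun a b => 0 < a * b) ((l.map Prod.snd).filter (fun x => decide (x ≠ 0))) m
  | [], _ => ⟨[], by simp⟩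
  | (a, b) :: t, h => by
    obtain ⟨m, hm1, hm2⟩ := exists_matching_sublist t (fun p hp => h p (List.mem_cons_of_mem _ hp))
    have hsub : ((t.map Prod.fst).filter (fun x => decide (x ≠ 0))).Sublist
        ((((a, b) :: t).map Prod.fst).filter (fun x => decide (x ≠ 0))) := by
      simp only [List.map_cons]
      exact (List.sublist_cons_self a _).filter _
    by_cases hb : b = 0
    · refine ⟨m, hm1.trans hsub, ?_⟩
      rw [List.map_cons, List.filter_cons_of_neg (by simp [hb])]
      exact hm2
    · have hab : 0 < a * b := h (a, b) List.mem_cons_self hb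
      have ha : a ≠ 0 := by
        intro h0; rw [h0, zero_mul] at hab; exact lt_irrefl _ hab
      refine ⟨a :: m, ?_, ?_⟩
      · rw [List.map_cons, List.filter_cons_of_pos (by simp [ha])]
        exact hm1.cons₂ a
      · rw [List.map_cons, List.filter_cons_of_pos (by simp [hb])]
        exact List.Forall₂.cons (by nlinarith) hm2

lemma sminus_key (l : List (ℝ × ℝ)) (h : ∀ p ∈ l, p.2 ≠ 0 → 0 < p.1 * p.2) :
    signVarAux ((l.map Prod.snd).filter (fun x => decide (x ≠ 0))) ≤
      signVarAux ((l.map Prod.fst).filter (fun x => decide (x ≠ 0))) := by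
  obtain ⟨m, hm1, hm2⟩ := exists_matching_sublist l h
  have hnz : ∀ x ∈ (l.map Prod.fst).filter (fun x => decide (x ≠ 0)), x ≠ 0 := by
    intro x hx
    simpa using List.of_mem_filter hx
  rw [signVarAux_congr hm2]
  exact (signVarAux_sublist hm1 hnz).1

lemma forall₂_ofFn {R : ℝ → ℝ → Prop} :
    ∀ {n : ℕ} (f g : Fin n → ℝ), (∀ i, R (f i) (g i)) →
      List.Forall₂ R (List.ofFn f) (List.ofFn g)
  | 0, f, g, h => by simp
  | n + 1, f, g, h => by
    rw [List.ofFn_succ, List.ofFn_succ]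
    exact List.Forall₂.cons (h 0) (forall₂_ofFn _ _ fun i => h i.succ)

lemma map_ofFn_pair_fst {n : ℕ} (f g : Fin n → ℝ) :
    ((List.ofFn fun i => (f i, g i)).map Prod.fst) = List.ofFn f := by
  rw [List.map_ofFn]; rfl

lemma map_ofFn_pair_snd {n : ℕ} (f g : Fin n → ℝ) :
    ((List.ofFn fun i => (f i, g i)).map Prod.snd) = List.ofFn g := by
  rw [List.map_ofFn]; rfl

/-- s⁻ comparison from pointwise sign condition. -/
lemma sminus_mono' {n : ℕ} (y z : Fin n → ℝ) (h : ∀ i, z i ≠ 0 → 0 < y i * z i) :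
    sminus z ≤ sminus y := by
  have := sminus_key (List.ofFn fun i => (y i, z i)) (by
    intro p hp hp2
    rw [List.mem_ofFn] at hp
    obtain ⟨i, hi⟩ := hp
    rw [← hi] at hp2 ⊢
    exact h i hp2)
  rwa [map_ofFn_pair_fst, map_ofFn_pair_snd] at this

lemma filter_ofFn_eq_self {n : ℕ} (c : Fin n → ℝ) (hcnz : ∀ i, c i ≠ 0) :
    (List.ofFn c).filter (fun x => decide (x ≠ 0)) = List.ofFn c := by
  apply List.filter_eq_self.mpr
  intro a ha
  rw [List.mem_ofFn] at ha
  obtain ⟨i, hi⟩ := ha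
  simp [← hi, hcnz i]

/-- s⁻ ≤ s⁺. -/
lemma sminus_le_splus {n : ℕ} (y : Fin n → ℝ) : sminus y ≤ splus y := by
  set c : Fin n → ℝ := fun i =>
    if y i = 0 then (if (fun _ : Fin n => true) i then (1:ℝ) else -1) else y i with hc
  have hcnz : ∀ i, c i ≠ 0 := by
    intro i
    simp only [hc]
    by_cases hyi : y i = 0 <;> simp [hyi]
  have h1 : sminus y ≤ signVarAux (List.ofFn c) := by
    have := sminus_key (List.ofFn fun i => (c i, y i)) (by
      intro p hp hp2
      rw [List.mem_ofFn] at hp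
      obtain ⟨i, hi⟩ := hp
      rw [← hi] at hp2 ⊢
      have hp2' : y i ≠ 0 := hp2
      show 0 < c i * y i
      have hci : c i = y i := by simp only [hc]; rw [if_neg hp2']
      rw [hci]
      exact mul_self_pos.mpr hp2')
    rw [map_ofFn_pair_fst, map_ofFn_pair_snd, filter_ofFn_eq_self c hcnz] at this
    exact this
  exact h1.trans (Finset.le_sup (f := fun σ : Fin n → Bool =>
    signVarAux (List.ofFn fun i => if y i = 0 then (if σ i then (1:ℝ) else -1) else y i))
    (Finset.mem_univ (fun _ : Fin n => true)))

/-- upper semicontinuity of s⁺ from pointwise sign condition. -/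
lemma splus_mono' {n : ℕ} (y z : Fin n → ℝ) (h : ∀ i, z i ≠ 0 → 0 < y i * z i) :
    splus y ≤ splus z := by
  apply Finset.sup_le
  intro σ _
  set cy : Fin n → ℝ := fun i => if y i = 0 then (if σ i then (1:ℝ) else -1) else y i with hcy
  have hcynz : ∀ i, cy i ≠ 0 := by
    intro i
    simp only [hcy]
    by_cases hyi : y i = 0
    · by_cases hσ : σ i <;> simp [hyi, hσ]
    · simp [hyi]
  set τ : Fin n → Bool := fun i => decide (0 < cy i) with hτ
  set cz : Fin n → ℝ := fun i => if z i = 0 then (if τ i then (1:ℝ) else -1) else z i with hcz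
  have key : ∀ i, 0 < cy i * cz i := by
    intro i
    by_cases hzi : z i = 0
    · have hcz' : cz i = if τ i then (1:ℝ) else -1 := by simp only [hcz]; rw [if_pos hzi]
      rw [hcz']
      by_cases hpos : 0 < cy i
      · have : τ i = true := by simp [hτ, hpos]
        rw [this, if_pos rfl, mul_one]; exact hpos
      · have hneg : cy i < 0 := lt_of_le_of_ne (not_lt.mp hpos) (hcynz i)
        have : τ i = false := by simp [hτ, hpos]
        rw [this]
        simp only [Bool.false_eq_true, if_false]
        nlinarith
    · have hyz := h i hzi
      have hyi : y i ≠ 0 := by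
        intro h0; rw [h0, zero_mul] at hyz; exact lt_irrefl _ hyz
      have h1 : cy i = y i := by simp only [hcy]; rw [if_neg hyi]
      have h2 : cz i = z i := by simp only [hcz]; rw [if_neg hzi]
      rw [h1, h2]; exact hyz
  calc signVarAux (List.ofFn cy) = signVarAux (List.ofFn cz) :=
        signVarAux_congr (forall₂_ofFn cy cz key)
    _ ≤ splus z := Finset.le_sup (f := fun σ : Fin n → Bool =>
        signVarAux (List.ofFn fun i => if z i = 0 then (if σ i then (1:ℝ) else -1) else z i))
        (Finset.mem_univ τ)

/-- approximation lemma: s⁺ z is attained as s⁻ of a nearby point. -/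
lemma splus_approx {n : ℕ} (z : Fin n → ℝ) (ε : ℝ) (hε : 0 < ε) :
    ∃ y : Fin n → ℝ, (∀ i, |y i - z i| < ε) ∧ splus z ≤ sminus y := by
  obtain ⟨σ, _, hσ⟩ := Finset.exists_mem_eq_sup (Finset.univ : Finset (Fin n → Bool))
    ⟨fun _ => true, Finset.mem_univ _⟩
    (fun σ : Fin n → Bool =>
      signVarAux (List.ofFn fun i => if z i = 0 then (if σ i then (1:ℝ) else -1) else z i))
  set y : Fin n → ℝ := fun i => if z i = 0 then (if σ i then ε/2 else -(ε/2)) else z i with hy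
  have hynz : ∀ i, y i ≠ 0 := by
    intro i
    simp only [hy]
    by_cases hzi : z i = 0
    · by_cases hσi : σ i <;> simp [hzi, hσi] <;> positivity
    · simp [hzi]
  refine ⟨y, ?_, ?_⟩
  · intro i
    simp only [hy]
    by_cases hzi : z i = 0
    · rw [if_pos hzi, hzi, sub_zero]
      by_cases hσi : σ i <;> simp [hσi, abs_of_pos, abs_of_neg, hε] <;>
        rw [abs_of_pos (by positivity)] <;> linarith
    · rw [if_neg hzi]; simpa using hε
  · have key : ∀ i, 0 < y i *
        (if z i = 0 then (if σ i then (1:ℝ) else -1) else z i) := by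
      intro i
      simp only [hy]
      by_cases hzi : z i = 0
      · rw [if_pos hzi, if_pos hzi]
        by_cases hσi : σ i
        · rw [if_pos hσi, if_pos hσi, mul_one]; linarith
        · rw [if_neg hσi, if_neg hσi]; nlinarith
      · rw [if_neg hzi, if_neg hzi]
        exact mul_self_pos.mpr hzi
    have h2 : sminus y = signVarAux (List.ofFn y) := by
      unfold sminus
      rw [filter_ofFn_eq_self y hynz]
    rw [h2, splus, hσ]
    exact le_of_eq (signVarAux_congr (forall₂_ofFn _ _ key)).symm

lemma exists_nbhd {n : ℕ} (hn : 0 < n) (z : Fin n → ℝ) :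
    ∃ ε > 0, ∀ y : Fin n → ℝ, dist y z < ε → ∀ i, z i ≠ 0 → 0 < y i * z i := by
  have hne : (Finset.univ : Finset (Fin n)).Nonempty := ⟨⟨0, hn⟩, Finset.mem_univ _⟩
  set ε := Finset.univ.inf' hne (fun i => if z i = 0 then 1 else |z i|) with hε
  have hεpos : 0 < ε := by
    rw [hε, Finset.lt_inf'_iff]
    intro i _
    by_cases hzi : z i = 0 <;> simp [hzi, abs_pos]
  refine ⟨ε, hεpos, ?_⟩
  intro y hdist i hzi
  have h1 : dist (y i) (z i) < ε := (dist_pi_lt_iff hεpos).mp hdist i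
  have h2 : ε ≤ |z i| := by
    have := Finset.inf'_le (f := fun i => if z i = 0 then 1 else |z i|) (Finset.mem_univ i)
    rw [if_neg hzi] at this
    exact this
  have h3 : |y i - z i| < |z i| := by
    rw [Real.dist_eq] at h1; linarith
  have h4 : (y i - z i)^2 < (z i)^2 := by
    nlinarith [abs_nonneg (y i - z i), sq_abs (y i - z i), sq_abs (z i)]
  nlinarith [sq_nonneg (y i)]


/-- `P^k_+` is the interior of `P^k_-`, and `P^k_-` is closed. -/
theorem stmt1 (n k : ℕ) (hk : 1 ≤ k) (hkn : k ≤ n) :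
    {z : Fin n → ℝ | splus z ≤ k - 1} = interior {z : Fin n → ℝ | sminus z ≤ k - 1} ∧
    IsClosed {z : Fin n → ℝ | sminus z ≤ k - 1} := by
  have hn : 0 < n := hk.trans hkn
  have hclosed : IsClosed {z : Fin n → ℝ | sminus z ≤ k - 1} := by
    rw [← isOpen_compl_iff, Metric.isOpen_iff]
    intro z hz
    obtain ⟨ε, hεpos, hball⟩ := exists_nbhd hn z
    refine ⟨ε, hεpos, ?_⟩
    intro y hy
    simp only [Set.mem_compl_iff, Set.mem_setOf_eq] at hz ⊢
    intro hcon
    exact hz ((sminus_mono' y z (hball y (Metric.mem_ball.mp hy))).trans hcon)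
  refine ⟨?_, hclosed⟩
  apply Set.Subset.antisymm
  · intro z hz
    simp only [Set.mem_setOf_eq] at hz
    rw [mem_interior_iff_mem_nhds, Metric.mem_nhds_iff]
    obtain ⟨ε, hεpos, hball⟩ := exists_nbhd hn z
    refine ⟨ε, hεpos, ?_⟩
    intro y hy
    simp only [Set.mem_setOf_eq]
    calc sminus y ≤ splus y := sminus_le_splus y
      _ ≤ splus z := splus_mono' y z (hball y (Metric.mem_ball.mp hy))
      _ ≤ k - 1 := hz
  · intro z hz
    rw [mem_interior_iff_mem_nhds, Metric.mem_nhds_iff] at hz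
    obtain ⟨ε, hεpos, hball⟩ := hz
    obtain ⟨y, hy1, hy2⟩ := splus_approx z ε hεpos
    have hymem : y ∈ Metric.ball z ε := by
      rw [Metric.mem_ball, dist_pi_lt_iff hεpos]
      intro i
      rw [Real.dist_eq]
      exact hy1 i
    have hmem := hball hymem
    simp only [Set.mem_setOf_eq] at hmem ⊢
    exact hy2.trans hmem
end

section
/- If A in R^{n×m} (m ≤ n) is strictly sign-regular (for each k ≤ m, all k×k minors nonzero with a common sign), then s^+(Ax) ≤ s^-(x) for all nonzero x in R^m. -/
open Classical

lemma signVarAux_cons_le (a : ℝ) (t : List ℝ) : signVarAux (a :: t) ≤ t.length := by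
  induction t generalizing a with
  | nil => simp [signVarAux]
  | cons b t ih =>
    have := ih b
    simp only [signVarAux, List.length_cons]
    split <;> omega

lemma signVarAux_le_append (l l2 : List ℝ) : signVarAux l ≤ signVarAux (l ++ l2) := by
  induction l with
  | nil => simp [signVarAux]
  | cons a t ih =>
    cases t with
    | nil => simp [signVarAux]
    | cons b t' =>
      simp only [List.cons_append, List.append_eq, signVarAux] at ih ⊢
      omega

lemma signVarAux_snoc_le (l : List ℝ) (a : ℝ) : signVarAux (l ++ [a]) ≤ signVarAux l + 1 := by
  induction l with
  | nil => simp [signVarAux]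
  | cons b t ih =>
    cases t with
    | nil => simp only [signVarAux, List.cons_append, List.nil_append]; split <;> omega
    | cons c t' =>
      simp only [List.cons_append, List.append_eq, signVarAux] at ih ⊢
      omega

lemma sign_last : ∀ (t : List ℝ) (a : ℝ), (∀ x ∈ a::t, x ≠ 0) →
    0 < a * (a::t).getLast (List.cons_ne_nil a t) * (-1:ℝ)^(signVarAux (a::t)) := by
  intro t
  induction t with
  | nil =>
    intro a h
    have ha : a ≠ 0 := h a (by simp)
    simp [signVarAux]
    positivity
  | cons b t ih =>
    intro a h
    have ha : a ≠ 0 := h a (by simp)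
    have hb : b ≠ 0 := h b (by simp)
    have htail := ih b (fun x hx => h x (by simp at hx ⊢; tauto))
    rw [List.getLast_cons (List.cons_ne_nil b t)]
    simp only [signVarAux]
    set L := (b::t).getLast (List.cons_ne_nil b t) with hL
    set v := signVarAux (b::t) with hv
    by_cases hab : a * b < 0
    · rw [if_pos hab, pow_add, pow_one]
      nlinarith [sq_nonneg b, sq_nonneg (L * (-1:ℝ)^v)]
    · have : 0 < a * b := lt_of_le_of_ne (not_lt.1 hab) (Ne.symm (mul_ne_zero ha hb))
      rw [if_neg hab, zero_add]
      nlinarith [sq_nonneg b]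

lemma extract' : ∀ (t : List ℝ) (a : ℝ), (∀ x ∈ a::t, x ≠ 0) →
    ∃ g : Fin (signVarAux (a::t) + 1) → Fin (a::t).length, StrictMono g ∧
      g 0 = ⟨0, Nat.succ_pos _⟩ ∧
      ∀ j : Fin (signVarAux (a::t)), (a::t).get (g j.castSucc) * (a::t).get (g j.succ) < 0 := by
  intro t
  induction t with
  | nil =>
    intro a _
    rw [show signVarAux [a] = 0 from by simp [signVarAux]]
    refine ⟨fun _ => ⟨0, Nat.succ_pos _⟩, ?_, rfl, ?_⟩
    · intro i j hij
      have hi := i.2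
      have hj := j.2
      simp only [Fin.lt_iff_val_lt_val] at hij
      omega
    · intro j; exact j.elim0
  | cons b t ih =>
    intro a h
    have ha : a ≠ 0 := h a (by simp)
    have hb : b ≠ 0 := h b (by simp)
    obtain ⟨g', hg'mono, hg'0, hg'pair⟩ := ih b (fun x hx => h x (by simp at hx ⊢; tauto))
    by_cases hab : a * b < 0
    · have hv : signVarAux (a::b::t) = signVarAux (b::t) + 1 := by
        simp [signVarAux, hab, Nat.add_comm]
      rw [hv]
      refine ⟨Fin.cases ⟨0, Nat.succ_pos _⟩ (fun j => (g' j).succ), ?_, ?_, ?_⟩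
      · intro i j hij
        rcases Fin.eq_zero_or_eq_succ i with rfl | ⟨i', rfl⟩ <;>
          rcases Fin.eq_zero_or_eq_succ j with rfl | ⟨j', rfl⟩
        · exact absurd hij (lt_irrefl _)
        · simp only [Fin.cases_zero, Fin.cases_succ]
          exact Fin.succ_pos _
        · exact absurd hij (by simp [Fin.lt_iff_val_lt_val])
        · simp only [Fin.cases_succ]
          exact Fin.succ_lt_succ_iff.2 (hg'mono (Fin.succ_lt_succ_iff.1 hij))
      · simp
      · intro j
        rcases Fin.eq_zero_or_eq_succ j with rfl | ⟨j', rfl⟩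
        · simp only [Fin.castSucc_zero, Fin.cases_zero, Fin.succ_zero_eq_one]
          have h1 : (1 : Fin (signVarAux (b::t) + 2)) = Fin.succ 0 := rfl
          rw [h1]
          simp only [Fin.cases_succ, hg'0]
          simpa using hab
        · rw [← Fin.succ_castSucc]
          simp only [Fin.cases_succ]
          have := hg'pair j'
          simpa using this
    · have hv : signVarAux (a::b::t) = signVarAux (b::t) := by
        simp [signVarAux, hab]
      rw [hv]
      have hab' : 0 < a * b := lt_of_le_of_ne (not_lt.1 hab) (Ne.symm (mul_ne_zero ha hb))
      refine ⟨fun j => if j = 0 then ⟨0, Nat.succ_pos _⟩ else (g' j).succ, ?_, ?_, ?_⟩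
      · intro i j hij
        by_cases hi : i = 0
        · have hj : j ≠ 0 := by rintro rfl; exact absurd hij (by simp [hi])
          simp only [hi, if_pos rfl, if_neg hj]
          exact Fin.succ_pos _
        · have hj : j ≠ 0 := by
            rintro rfl
            exact absurd (hij.trans' (Fin.pos_iff_ne_zero.2 hi)) (lt_irrefl _)
          simp only [if_neg hi, if_neg hj]
          exact Fin.succ_lt_succ_iff.2 (hg'mono hij)
      · simp
      · intro j
        by_cases hj : j.castSucc = 0
        · have hsucc : j.succ ≠ 0 := Fin.succ_ne_zero j
          beta_reduce
          rw [if_pos hj, if_neg hsucc]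
          have hp := hg'pair j
          rw [hj, hg'0] at hp
          have h0a : (a :: b :: t).get ⟨0, Nat.succ_pos _⟩ = a := rfl
          have h0b : (b :: t).get ⟨0, Nat.succ_pos _⟩ = b := rfl
          have hget : ((a :: b :: t).get ((g' j.succ).succ)) = (b :: t).get (g' j.succ) := by
            rcases g' j.succ with ⟨v, hv2⟩
            rfl
          rw [h0a, hget]
          rw [h0b] at hp
          have hbb : 0 < b * b := mul_self_pos.2 hb
          have h1 : (a*b) * (b * ((b :: t).get (g' j.succ))) < 0 := mul_neg_of_pos_of_neg hab' hp
          have h2 := div_neg_of_neg_of_pos h1 hbb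
          rwa [show (a*b) * (b * ((b :: t).get (g' j.succ))) / (b*b) = a * ((b :: t).get (g' j.succ)) from by field_simp] at h2
        · have hjs : j.succ ≠ 0 := Fin.succ_ne_zero j
          simp only [if_neg hj, if_neg hjs]
          have := hg'pair j
          simpa using this

lemma extract (l : List ℝ) (hl : ∀ x ∈ l, x ≠ 0) (hne : l ≠ []) (v : ℕ) (hv : v ≤ signVarAux l) :
    ∃ g : Fin (v+1) → Fin l.length, StrictMono g ∧
      ∀ j : Fin v, l.get (g j.castSucc) * l.get (g j.succ) < 0 := by
  obtain ⟨a, t, rfl⟩ : ∃ a t, l = a :: t := by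
    cases l with
    | nil => exact absurd rfl hne
    | cons a t => exact ⟨a, t, rfl⟩
  obtain ⟨g', hmono, _, hpair⟩ := extract' t a hl
  refine ⟨fun j => g' (Fin.castLE (by omega) j), fun i j hij => hmono (by simpa using hij), ?_⟩
  intro j
  have hjlt : (j : ℕ) < signVarAux (a::t) := lt_of_lt_of_le j.2 hv
  have := hpair ⟨j, hjlt⟩
  have e1 : Fin.castLE (by omega : v + 1 ≤ signVarAux (a::t) + 1) j.castSucc
      = (⟨(j:ℕ), hjlt⟩ : Fin (signVarAux (a::t))).castSucc := by
    apply Fin.ext; rfl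
  have e2 : Fin.castLE (by omega : v + 1 ≤ signVarAux (a::t) + 1) j.succ
      = (⟨(j:ℕ), hjlt⟩ : Fin (signVarAux (a::t))).succ := by
    apply Fin.ext; rfl
  beta_reduce
  rw [e1, e2]
  exact this

lemma nat_ivt (f : ℕ → ℕ) (hstep : ∀ i, f (i+1) ≤ f i + 1) (h0 : f 0 = 0) :
    ∀ N s, s ≤ f N → ∃ i, i ≤ N ∧ f i = s := by
  intro N
  induction N with
  | zero => intro s hs; exact ⟨0, le_refl _, by omega⟩
  | succ N ih =>
    intro s hs
    by_cases h : s ≤ f N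
    · obtain ⟨i, hi, hfi⟩ := ih s h
      exact ⟨i, by omega, hfi⟩
    · exact ⟨N+1, le_refl _, by have := hstep N; omega⟩

lemma sign_transfer {q e a : ℝ} (hq : q ≠ 0) (h1 : 0 < e * q) (h2 : 0 < q * a) : 0 < e * a := by
  have h3 := mul_pos h1 h2
  have h4 := div_pos h3 (mul_self_pos.2 hq)
  rwa [show e*q*(q*a)/(q*q) = e*a from by field_simp] at h4

lemma sminus_blocks {m : ℕ} (x : Fin m → ℝ) (hx : x ≠ 0) :
    ∃ ε : ℝ, (ε = 1 ∨ ε = -1) ∧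
      ∃ T : Fin m → Fin (sminus x + 1), Monotone T ∧
        (∀ j, 0 ≤ ε * (-1:ℝ)^((T j : ℕ)) * x j) ∧
        (∀ s : Fin (sminus x + 1), ∃ j, T j = s ∧ x j ≠ 0) := by
  classical
  set p : ℝ → Bool := fun a => decide (a ≠ 0) with hp
  set L : List ℝ := List.ofFn x with hL
  have hLlen : L.length = m := by simp [hL]
  set u : ℕ → ℕ := fun i => signVarAux ((L.take i).filter p) with hu
  have hu0 : u 0 = 0 := by simp [hu, signVarAux]
  have hTake : ∀ i (hi : i < m), L.take (i+1) = L.take i ++ [x ⟨i, hi⟩] := by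
    intro i hi
    rw [List.take_succ]
    congr 1
    rw [List.getElem?_eq_getElem (by omega)]
    simp [hL]
  have hTake2 : ∀ i, m ≤ i → L.take (i+1) = L.take i := by
    intro i hi
    rw [List.take_of_length_le (by omega), List.take_of_length_le (by omega)]
  have hmono1 : ∀ i, u i ≤ u (i+1) := by
    intro i
    by_cases hi : i < m
    · simp only [hu]
      rw [hTake i hi, List.filter_append]
      exact signVarAux_le_append _ _
    · simp [hu, hTake2 i (by omega)]
  have humono : Monotone u := monotone_nat_of_le_succ hmono1
  have hstep : ∀ i, u (i+1) ≤ u i + 1 := by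
    intro i
    by_cases hi : i < m
    · simp only [hu]
      rw [hTake i hi, List.filter_append]
      by_cases hz : p (x ⟨i, hi⟩) = true
      · simp only [List.filter_singleton, hz, cond_true]
        exact signVarAux_snoc_le _ _
      · have hz' : p (x ⟨i, hi⟩) = false := by simpa using hz
        simp only [List.filter_singleton, hz', cond_false, List.append_nil]
        omega
    · simp [hu, hTake2 i (by omega)]
  have hum : u m = sminus x := by
    simp only [hu]
    rw [show L.take m = L from by rw [← hLlen]; exact List.take_length]
    rfl
  -- the filtered list is nonempty
  obtain ⟨j0w, hj0w⟩ : ∃ j, x j ≠ 0 := Function.ne_iff.1 hx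
  set F : List ℝ := L.filter p with hF
  have hmemF : x j0w ∈ F := by
    rw [hF]
    refine List.mem_filter.2 ⟨?_, by simp [hp, hj0w]⟩
    rw [hL]
    exact List.mem_ofFn.2 ⟨j0w, rfl⟩
  obtain ⟨f0, F', hFcons⟩ := List.exists_cons_of_ne_nil (List.ne_nil_of_mem hmemF)
  have hf0 : f0 ≠ 0 := by
    have : f0 ∈ F := by rw [hFcons]; exact List.mem_cons_self
    rw [hF] at this
    have := (List.mem_filter.1 this).2
    simpa [hp] using this
  set ε : ℝ := if 0 < f0 then 1 else -1 with hε
  have hεpm : ε = 1 ∨ ε = -1 := by rw [hε]; split <;> simp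
  have hεf : 0 < ε * f0 := by
    rw [hε]; rcases lt_trichotomy 0 f0 with h | h | h
    · rw [if_pos h]; linarith
    · exact absurd h.symm hf0
    · rw [if_neg (by linarith)]; linarith
  -- key sign fact
  have hkey : ∀ j : Fin m, x j ≠ 0 → 0 < ε * (-1:ℝ)^(u ((j:ℕ)+1)) * x j := by
    intro j hj
    set P : List ℝ := (L.take ((j:ℕ)+1)).filter p with hP
    have hpx : p (x j) = true := by simp [hp, hj]
    have hPsnoc : P = (L.take (j:ℕ)).filter p ++ [x j] := by
      rw [hP, hTake (j:ℕ) j.2, List.filter_append]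
      congr 1
      rw [show (⟨(j:ℕ), j.2⟩ : Fin m) = j from Fin.eta j j.2, List.filter_singleton, hpx,
        cond_true]
    have hPne : P ≠ [] := by rw [hPsnoc]; simp
    obtain ⟨q, rest, hPcons⟩ := List.exists_cons_of_ne_nil hPne
    have hPnz : ∀ a ∈ P, a ≠ 0 := by
      intro a ha
      rw [hP] at ha
      have := (List.mem_filter.1 ha).2
      simpa [hp] using this
    have h1 : q :: rest = (L.take (j:ℕ)).filter p ++ [x j] := by rw [← hPcons, hPsnoc]
    have hl? : (q::rest).getLast? = some (x j) := by rw [h1]; exact List.getLast?_concat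
    have hlast : (q::rest).getLast (List.cons_ne_nil q rest) = x j := by
      rw [List.getLast?_eq_getLast (List.cons_ne_nil q rest)] at hl?
      exact Option.some_injective _ hl?
    have hsl := sign_last rest q (hPcons ▸ hPnz)
    rw [hlast] at hsl
    have hv2 : signVarAux (q::rest) = u ((j:ℕ)+1) := by
      simp only [hu]
      rw [← hP, hPcons]
    rw [hv2] at hsl
    -- identify q with f0
    have hFsplit : F = P ++ (L.drop ((j:ℕ)+1)).filter p := by
      rw [hF, hP, ← List.filter_append, List.take_append_drop]
    have hq : q = f0 := by
      have : F = q :: (rest ++ (L.drop ((j:ℕ)+1)).filter p) := by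
        rw [hFsplit, hPcons]; simp
      rw [hFcons] at this
      exact (List.cons_eq_cons.1 this).1.symm
    have hq0 : q ≠ 0 := by
      intro h0
      exact hPnz q (by rw [hPcons]; exact List.mem_cons_self) h0
    have hεq : 0 < ε * q := by rw [hq]; exact hεf
    have h2' : 0 < q * ((-1:ℝ)^(u ((j:ℕ)+1)) * x j) := by nlinarith [hsl]
    have := sign_transfer hq0 hεq h2'
    nlinarith [this]
  have hub : ∀ j : Fin m, u ((j:ℕ)+1) ≤ sminus x := by
    intro j
    rw [← hum]
    exact humono (by omega)
  refine ⟨ε, hεpm, fun j => ⟨u ((j:ℕ)+1), Nat.lt_succ_of_le (hub j)⟩, ?_, ?_, ?_⟩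
  · intro i j hij
    exact Fin.mk_le_mk.2 (humono (by have := Fin.le_iff_val_le_val.1 hij; omega))
  · intro j
    by_cases hj : x j = 0
    · simp [hj]
    · exact le_of_lt (hkey j hj)
  · intro s
    by_cases hs : (s:ℕ) = 0
    · have hex : ∃ i, ∃ hi : i < m, x ⟨i, hi⟩ ≠ 0 :=
        ⟨(j0w:ℕ), j0w.2, by rw [Fin.eta]; exact hj0w⟩
      set i0 := Nat.find hex with hi0
      obtain ⟨hi0m, hxi0⟩ := Nat.find_spec hex
      refine ⟨⟨i0, hi0m⟩, ?_, hxi0⟩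
      have hfilnil : (L.take i0).filter p = [] := by
        rw [List.filter_eq_nil_iff]
        intro a ha
        obtain ⟨idx, hidx, hget⟩ := List.mem_iff_getElem.1 ha
        have hlen : (L.take i0).length = min i0 L.length := List.length_take
        have hidxi0 : idx < i0 := by rw [hlen] at hidx; omega
        have hidxm : idx < m := by rw [hlen, hLlen] at hidx; omega
        have hga : a = x ⟨idx, hidxm⟩ := by
          rw [← hget]
          simp [hL]
        have hzero := Nat.find_min hex hidxi0
        push_neg at hzero
        have : x ⟨idx, hidxm⟩ = 0 := hzero hidxm
        rw [hga, this]
        simp [hp]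
      have hT0 : u (i0+1) = 0 := by
        have hpx : p (x ⟨i0, hi0m⟩) = true := by simp [hp]; exact hxi0
        simp only [hu]
        rw [hTake i0 hi0m, List.filter_append, hfilnil, List.nil_append,
          List.filter_singleton, hpx, cond_true]
        simp [signVarAux]
      apply Fin.ext
      simp only [hT0]
      omega
    · have hex : ∃ i, u i = (s:ℕ) := by
        obtain ⟨i, _, hi⟩ := nat_ivt u hstep hu0 m (s:ℕ)
          (by rw [hum]; have := s.2; omega)
        exact ⟨i, hi⟩
      have hspec : u (Nat.find hex) = (s:ℕ) := Nat.find_spec hex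
      have hne0 : Nat.find hex ≠ 0 := by intro h; rw [h, hu0] at hspec; omega
      obtain ⟨i', hi'⟩ : ∃ i', Nat.find hex = i' + 1 := ⟨Nat.find hex - 1, by omega⟩
      rw [hi'] at hspec
      have hmin : u i' ≠ (s:ℕ) := Nat.find_min hex (by omega)
      have hlt : u i' < (s:ℕ) := lt_of_le_of_ne (by rw [← hspec]; exact hmono1 i') hmin
      have hi'm : i' < m := by
        by_contra hge
        have : u (i'+1) = u i' := by simp only [hu]; rw [hTake2 i' (by omega)]
        omega
      have hxne : x ⟨i', hi'm⟩ ≠ 0 := by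
        intro h0
        have hpz : p (x ⟨i', hi'm⟩) = false := by simp [hp, h0]
        have : u (i'+1) = u i' := by
          simp only [hu]
          rw [hTake i' hi'm, List.filter_append, List.filter_singleton, hpz, cond_false,
            List.append_nil]
        omega
      exact ⟨⟨i', hi'm⟩, Fin.ext (by simpa using hspec), hxne⟩

lemma sign_transfer' {q e a : ℝ} (hq : q ≠ 0) (h1 : 0 < e * q) (h2 : 0 < q * a) : 0 < e * a := by
  have h3 := mul_pos h1 h2
  have h4 := div_pos h3 (mul_self_pos.2 hq)
  rwa [show e*q*(q*a)/(q*q) = e*a from by field_simp] at h4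

lemma sign_flip {c u w : ℝ} (hu : u ≠ 0) (h1 : 0 < c * u) (h2 : u * w < 0) : 0 < (-c) * w := by
  have h2' : 0 < u * (-w) := by linarith
  have := sign_transfer' hu h1 h2'
  linarith

lemma extract_fn {n : ℕ} (y : Fin n → ℝ) (hy : ∀ i, y i ≠ 0) (v : ℕ)
    (hv0 : 0 < v) (hv : v ≤ signVarAux (List.ofFn y)) :
    ∃ g : Fin (v+1) → Fin n, StrictMono g ∧
      ∀ j : Fin v, y (g j.castSucc) * y (g j.succ) < 0 := by
  have hne : List.ofFn y ≠ [] := by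
    intro h
    rw [h] at hv
    simp [signVarAux] at hv
    omega
  obtain ⟨g, hm, hp⟩ := extract (List.ofFn y)
    (by
      intro a ha
      obtain ⟨i, rfl⟩ := List.mem_ofFn.1 ha
      exact hy i) hne v hv
  refine ⟨fun j => Fin.cast (List.length_ofFn : (List.ofFn y).length = n) (g j), ?_, ?_⟩
  · intro i j hij
    have := hm hij
    rw [Fin.lt_def] at this ⊢
    simpa using this
  · intro j
    have := hp j
    rwa [List.get_ofFn, List.get_ofFn] at this

lemma alt_sign {n v : ℕ} (y : Fin n → ℝ) (hy : ∀ i, y i ≠ 0) (g : Fin (v+1) → Fin n)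
    (hpair : ∀ j : Fin v, y (g j.castSucc) * y (g j.succ) < 0) :
    ∃ δ : ℝ, (δ = 1 ∨ δ = -1) ∧ ∀ j : Fin (v+1), 0 < δ * (-1:ℝ)^(j:ℕ) * y (g j) := by
  set δ : ℝ := if 0 < y (g 0) then 1 else -1 with hδ
  refine ⟨δ, by rw [hδ]; split <;> simp, ?_⟩
  have key : ∀ jv (h : jv < v + 1), 0 < δ * (-1:ℝ)^jv * y (g ⟨jv, h⟩) := by
    intro jv
    induction jv with
    | zero =>
      intro h
      have h0 : (⟨0, h⟩ : Fin (v+1)) = 0 := rfl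
      rw [h0, pow_zero, mul_one]
      rcases lt_trichotomy 0 (y (g 0)) with hlt | heq | hlt
      · rw [hδ, if_pos hlt]; linarith
      · exact absurd heq.symm (hy _)
      · rw [hδ, if_neg (by linarith)]; linarith
    | succ jv ih =>
      intro h
      have hjv : jv < v := by omega
      have hc : (⟨jv, by omega⟩ : Fin (v+1)) = (⟨jv, hjv⟩ : Fin v).castSucc := rfl
      have hs : (⟨jv+1, h⟩ : Fin (v+1)) = (⟨jv, hjv⟩ : Fin v).succ := rfl
      have hp := hpair ⟨jv, hjv⟩
      rw [← hc, ← hs] at hp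
      have ihh := ih (by omega)
      have hu : y (g ⟨jv, by omega⟩) ≠ 0 := hy _
      have := sign_flip hu ihh hp
      rw [pow_succ]
      nlinarith [this]
  intro j
  have := key (j:ℕ) j.2
  rwa [Fin.eta j j.2] at this

open Matrix

/-- if `A ∈ ℝ^{n×m}` (`m ≤ n`) is strictly sign-regular,
then `s⁺(Ax) ≤ s⁻(x)` for all nonzero `x`. -/
theorem stmt12 (n m : ℕ) (hm : m ≤ n)
    (A : Matrix (Fin n) (Fin m) ℝ)
    (hssr : ∀ k, 1 ≤ k → k ≤ m → SSRk A k) :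
    ∀ x : Fin m → ℝ, x ≠ 0 → splus (A.mulVec x) ≤ sminus x := by
  intro x hx
  set k := sminus x with hk
  -- k + 1 ≤ m
  have hk1m : k + 1 ≤ m := by
    obtain ⟨j0, hj0⟩ := Function.ne_iff.1 hx
    have hj0' : x j0 ≠ 0 := by simpa using hj0
    have hmem : x j0 ∈ (List.ofFn x).filter (fun a => decide (a ≠ 0)) :=
      List.mem_filter.2 ⟨List.mem_ofFn.2 ⟨j0, rfl⟩, by simp [hj0']⟩
    obtain ⟨a, t, hcons⟩ := List.exists_cons_of_ne_nil (List.ne_nil_of_mem hmem)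
    have h1 : signVarAux ((List.ofFn x).filter (fun a => decide (a ≠ 0))) ≤ t.length := by
      rw [hcons]; exact signVarAux_cons_le a t
    have h2 : ((List.ofFn x).filter (fun a => decide (a ≠ 0))).length ≤ m := by
      have := List.length_filter_le (fun a : ℝ => decide (a ≠ 0)) (List.ofFn x)
      simpa using this
    have h3 : t.length + 1 = ((List.ofFn x).filter (fun a => decide (a ≠ 0))).length := by
      rw [hcons]; simp
    have h4 : k = signVarAux ((List.ofFn x).filter (fun a => decide (a ≠ 0))) := rfl
    omega
  obtain ⟨ε, hεpm, T, hTmono, hTsign, hTwit⟩ := sminus_blocks x hx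
  obtain ⟨d, hdpm, hdet⟩ : ∃ d : ℝ, (d = 1 ∨ d = -1) ∧
      ∀ (α : Fin (k+1) → Fin n) (β : Fin (k+1) → Fin m), StrictMono α → StrictMono β →
        0 < d * (A.submatrix α β).det := by
    rcases hssr (k+1) (by omega) hk1m with h | h
    · exact ⟨1, Or.inl rfl, fun α β hα hβ => by simpa using h α β hα hβ⟩
    · exact ⟨-1, Or.inr rfl, fun α β hα hβ => by have := h α β hα hβ; nlinarith⟩
  set B : Matrix (Fin n) (Fin (k+1)) ℝ :=
    fun i s => ∑ j ∈ Finset.univ.filter (fun j => T j = s), x j * A i j with hB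
  set w : Fin (k+1) → ℝ := fun s => ε * (-1:ℝ)^(s:ℕ) with hw
  set η : ℝ := d * ∏ s : Fin (k+1), w s with hη
  have hwx : ∀ (s : Fin (k+1)) (j : Fin m), T j = s → 0 ≤ w s * x j := by
    intro s j hTj
    have := hTsign j
    rw [hTj] at this
    simpa [hw] using this
  have hwne : ∀ s, w s ≠ 0 := by
    intro s
    rcases hεpm with h | h <;> simp [hw, h] <;> positivity
  -- y as fiberwise sum of B
  have hywB : ∀ i, A.mulVec x i = ∑ s : Fin (k+1), B i s := by
    intro i
    rw [hB]
    rw [Finset.sum_fiberwise_of_maps_to (fun j _ => Finset.mem_univ (T j))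
      (fun j => x j * A i j)]
    rw [Matrix.mulVec, dotProduct]
    exact Finset.sum_congr rfl (fun j _ => mul_comm _ _)
  -- minors of B all have strict sign η
  have hBdet : ∀ α : Fin (k+1) → Fin n, StrictMono α → 0 < η * (B.submatrix α id).det := by
    intro α hα
    set f := (Matrix.detRowAlternating :
      (Fin (k+1) → ℝ) [⋀^Fin (k+1)]→ₗ[ℝ] ℝ).toMultilinearMap with hf
    have hrows : (B.submatrix α id)ᵀ
        = fun s => ∑ j ∈ Finset.univ.filter (fun j => T j = s),
            (x j • fun i : Fin (k+1) => A (α i) j) := by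
      funext s i
      simp only [Matrix.transpose_apply, Matrix.submatrix_apply, id, hB, Finset.sum_apply,
        Pi.smul_apply, smul_eq_mul]
      rfl
    have hms := f.map_sum_finset (fun s (j : Fin m) => x j • fun i : Fin (k+1) => A (α i) j)
      (fun s => Finset.univ.filter (fun j => T j = s))
    have hfM : (B.submatrix α id).det = f ((B.submatrix α id)ᵀ) := by
      rw [← Matrix.det_transpose (B.submatrix α id)]
      rfl
    rw [hfM, hrows, hms, Finset.mul_sum]
    have htermval : ∀ r : Fin (k+1) → Fin m,
        f (fun s => x (r s) • fun i : Fin (k+1) => A (α i) (r s))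
          = (∏ s : Fin (k+1), x (r s)) * (A.submatrix α r).det := by
      intro r
      rw [f.map_smul_univ (fun s => x (r s)) (fun s i => A (α i) (r s))]
      have h1 : (fun s i => A (α i) (r s)) = (A.submatrix α r)ᵀ := rfl
      rw [h1, show f ((A.submatrix α r)ᵀ) = ((A.submatrix α r)ᵀ).det from rfl,
        Matrix.det_transpose, smul_eq_mul]
    have hrT : ∀ r ∈ Fintype.piFinset (fun s : Fin (k+1) =>
        Finset.univ.filter (fun j => T j = s)), ∀ s, T (r s) = s := by
      intro r hr s
      exact (Finset.mem_filter.1 (Fintype.mem_piFinset.1 hr s)).2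
    have hrmono : ∀ r ∈ Fintype.piFinset (fun s : Fin (k+1) =>
        Finset.univ.filter (fun j => T j = s)), StrictMono r := by
      intro r hr s s' hss
      by_contra hle
      push_neg at hle
      have h2 := hTmono hle
      rw [hrT r hr s, hrT r hr s'] at h2
      exact absurd hss (not_lt.2 h2)
    have hsign : ∀ r ∈ Fintype.piFinset (fun s : Fin (k+1) =>
        Finset.univ.filter (fun j => T j = s)),
        η * f (fun s => x (r s) • fun i : Fin (k+1) => A (α i) (r s))
          = (∏ s : Fin (k+1), (w s * x (r s))) * (d * (A.submatrix α r).det) := by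
      intro r _
      rw [htermval r, hη,
        show (∏ s : Fin (k+1), (w s * x (r s)))
          = (∏ s : Fin (k+1), w s) * (∏ s : Fin (k+1), x (r s)) from Finset.prod_mul_distrib]
      ring
    apply Finset.sum_pos'
    · intro r hr
      rw [hsign r hr]
      exact mul_nonneg
        (Finset.prod_nonneg (fun s _ => hwx s (r s) (hrT r hr s)))
        (le_of_lt (hdet α r hα (hrmono r hr)))
    · refine ⟨fun s => (hTwit s).choose, ?_, ?_⟩
      · exact Fintype.mem_piFinset.2 (fun s => Finset.mem_filter.2
          ⟨Finset.mem_univ _, (hTwit s).choose_spec.1⟩)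
      · have hmem : (fun s => (hTwit s).choose) ∈ Fintype.piFinset (fun s : Fin (k+1) =>
            Finset.univ.filter (fun j => T j = s)) :=
          Fintype.mem_piFinset.2 (fun s => Finset.mem_filter.2
            ⟨Finset.mem_univ _, (hTwit s).choose_spec.1⟩)
        rw [hsign _ hmem]
        apply mul_pos
        · apply Finset.prod_pos
          intro s _
          exact lt_of_le_of_ne (hwx s _ (hTwit s).choose_spec.1)
            (Ne.symm (mul_ne_zero (hwne s) (hTwit s).choose_spec.2))
        · exact hdet α _ hα (hrmono _ hmem)
  -- main bound
  apply Finset.sup_le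
  intro σ _
  by_contra hgt
  push_neg at hgt
  set y : Fin n → ℝ := A.mulVec x with hy
  set y' : Fin n → ℝ := fun i => if y i = 0 then (if σ i then (1:ℝ) else -1) else y i with hy'
  have hy'ne : ∀ i, y' i ≠ 0 := by
    intro i
    by_cases h : y i = 0
    · simp only [hy', if_pos h]
      split <;> norm_num
    · simp only [hy', if_neg h]
      exact h
  obtain ⟨g, hgmono, hgpair⟩ := extract_fn y' hy'ne (k+1) (by omega) (by omega)
  obtain ⟨δ, hδpm, hδalt⟩ := alt_sign y' hy'ne g hgpair
  have hδne : δ ≠ 0 := by rcases hδpm with h | h <;> simp [h]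
  have hweak : ∀ j : Fin (k+2), 0 ≤ δ * (-1:ℝ)^(j:ℕ) * y (g j) := by
    intro j
    by_cases h0 : y (g j) = 0
    · rw [h0, mul_zero]
    · have he : y' (g j) = y (g j) := by rw [hy']; exact if_neg h0
      have := hδalt j
      rw [he] at this
      linarith
  -- the (k+2) × (k+2) matrix [y | B] on rows g
  set C : Matrix (Fin (k+2)) (Fin (k+2)) ℝ :=
    fun i => Fin.cases (y (g i)) (fun s => B (g i) s) with hC
  have hdetC : C.det = 0 := by
    rw [← Matrix.exists_mulVec_eq_zero_iff]
    refine ⟨Fin.cases 1 (fun _ => -1), ?_, ?_⟩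
    · intro h
      have := congrFun h 0
      simp at this
    · funext i
      show (Matrix.mulVec C _) i = 0
      rw [Matrix.mulVec, dotProduct, Fin.sum_univ_succ]
      simp only [hC, Fin.cases_zero, Fin.cases_succ, mul_one, mul_neg,
        Finset.sum_neg_distrib]
      rw [hywB (g i)]
      ring
  have hsub : ∀ i : Fin (k+2),
      (C.submatrix i.succAbove Fin.succ) = B.submatrix (fun a => g (i.succAbove a)) id := by
    intro i
    funext a b
    simp [hC, Matrix.submatrix_apply]
    rfl
  have hterm : ∀ i : Fin (k+2), 0 < η * (C.submatrix i.succAbove Fin.succ).det := by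
    intro i
    rw [hsub i]
    exact hBdet _ (hgmono.comp (Fin.strictMono_succAbove i))
  have hlaplace := Matrix.det_succ_column_zero C
  rw [hdetC] at hlaplace
  have hzero : ∀ i : Fin (k+2), y (g i) = 0 := by
    have hsum0 : (∑ i : Fin (k+2),
        (δ * (-1:ℝ)^(i:ℕ) * y (g i)) * (η * (C.submatrix i.succAbove Fin.succ).det)) = 0 := by
      have hre : ∀ i : Fin (k+2),
          (δ * (-1:ℝ)^(i:ℕ) * y (g i)) * (η * (C.submatrix i.succAbove Fin.succ).det)
          = (δ * η) * ((-1:ℝ)^(i:ℕ) * C i 0 * (C.submatrix i.succAbove Fin.succ).det) := by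
        intro i
        have : C i 0 = y (g i) := by simp [hC]
        rw [this]; ring
      rw [Finset.sum_congr rfl (fun i _ => hre i), ← Finset.mul_sum, ← hlaplace, mul_zero]
    have hnn : ∀ i ∈ (Finset.univ : Finset (Fin (k+2))), (0:ℝ) ≤
        (δ * (-1:ℝ)^(i:ℕ) * y (g i)) * (η * (C.submatrix i.succAbove Fin.succ).det) :=
      fun i _ => mul_nonneg (hweak i) (le_of_lt (hterm i))
    have hall := (Finset.sum_eq_zero_iff_of_nonneg hnn).1 hsum0
    intro i
    have hi := hall i (Finset.mem_univ i)
    have h2 : δ * (-1:ℝ)^(i:ℕ) * y (g i) = 0 := by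
      rcases mul_eq_zero.1 hi with h | h
      · exact h
      · exact absurd h (ne_of_gt (hterm i))
    have hpow : ((-1:ℝ))^(i:ℕ) ≠ 0 := by positivity
    rcases mul_eq_zero.1 h2 with h | h
    · rcases mul_eq_zero.1 h with h' | h'
      · exact absurd h' hδne
      · exact absurd h' hpow
    · exact h
  -- contradiction: last minor is zero but nonzero
  have hlastdet : (B.submatrix (fun a => g ((Fin.last (k+1)).succAbove a)) id).det = 0 := by
    rw [← Matrix.exists_mulVec_eq_zero_iff]
    refine ⟨fun _ => 1, ?_, ?_⟩
    · intro h
      have := congrFun h ⟨0, by omega⟩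
      simp at this
    · funext a
      rw [Matrix.mulVec, dotProduct]
      simp only [Matrix.submatrix_apply, id, mul_one]
      rw [← hywB (g ((Fin.last (k+1)).succAbove a))]
      exact hzero _
  have := hterm (Fin.last (k+1))
  rw [hsub, hlastdet, mul_zero] at this
  exact lt_irrefl 0 this
end
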